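/- Let R be a complete lattice in which the opposite poset R^op is a dcpo whose every element is compact (every principal ideal ↓x is Scott-open in R^op viewpoint; equivalently every element of R is 'co-compact'). Let F = {↓F : F a finite subset of R} be the lattice of finitely generated lower sets ordered by inclusion. Then F is closed under arbitrary intersections of filtered families, and (F, ⊆) is a complete lattice. -/

import Mathlib

/-- The collection of finitely generated lower sets `↓F = ⋃_{x ∈ F} ↓x`, `F ⊆ R` finite. -/
def FinLower (R : Type*) [Preorder R] : Set (Set R) :=
  {S | ∃ t : Finset R, S = ⋃ x ∈ t, Set.Iic x}

namespace FinLowerAux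

variable {R : Type*} [CompleteLattice R]

/-- The set of maximal elements of a set. -/
def maxSet (A : Set R) : Set R := {x | x ∈ A ∧ ∀ y ∈ A, ¬ x < y}

theorem maxSet_subset (A : Set R) : maxSet A ⊆ A := fun _ h => h.1

theorem isLowerSet_of_mem {A : Set R} (hA : A ∈ FinLower R) : IsLowerSet A := by
  obtain ⟨t, rfl⟩ := hA
  intro a b hba ha
  simp only [Set.mem_iUnion, Set.mem_Iic] at ha ⊢
  obtain ⟨x, hx, hax⟩ := ha
  exact ⟨x, hx, hba.trans hax⟩

theorem exists_le_maxSet {A : Set R} (hA : A ∈ FinLower R) {a : R} (ha : a ∈ A) :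
    ∃ m ∈ maxSet A, a ≤ m := by
  classical
  obtain ⟨t, rfl⟩ := hA
  set u := t.filter (fun g => a ≤ g) with hu
  have hune : u.Nonempty := by
    simp only [Set.mem_iUnion, Set.mem_Iic] at ha
    obtain ⟨x, hx, hax⟩ := ha
    exact ⟨x, by simp [hu, hx, hax]⟩
  obtain ⟨g, hg, hgmax⟩ := u.exists_maximal hune
  have hgt : g ∈ t := (Finset.mem_filter.1 hg).1
  have hag : a ≤ g := (Finset.mem_filter.1 hg).2
  refine ⟨g, ⟨?_, ?_⟩, hag⟩
  · simp only [Set.mem_iUnion, Set.mem_Iic]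
    exact ⟨g, hgt, le_refl g⟩
  · intro y hy hlt
    simp only [Set.mem_iUnion, Set.mem_Iic] at hy
    obtain ⟨g', hg', hyg'⟩ := hy
    have hgg' : g < g' := lt_of_lt_of_le hlt hyg'
    have : g' ∈ u := Finset.mem_filter.2 ⟨hg', hag.trans hgg'.le⟩
    exact lt_irrefl g (lt_of_lt_of_le hgg' (hgmax this hgg'.le))

theorem maxSet_finite {A : Set R} (hA : A ∈ FinLower R) : (maxSet A).Finite := by
  obtain ⟨t, rfl⟩ := hA
  apply Set.Finite.subset t.finite_toSet
  rintro m ⟨hm, hmax⟩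
  simp only [Set.mem_iUnion, Set.mem_Iic] at hm
  obtain ⟨g, hg, hmg⟩ := hm
  have hgA : g ∈ ⋃ x ∈ t, Set.Iic x := by
    simp only [Set.mem_iUnion, Set.mem_Iic]; exact ⟨g, hg, le_refl g⟩
  rcases eq_or_lt_of_le hmg with h | h
  · simpa [h] using hg
  · exact absurd h (hmax g hgA)

theorem eq_biUnion_maxSet {A : Set R} (hA : A ∈ FinLower R) :
    A = ⋃ m ∈ maxSet A, Set.Iic m := by
  ext a
  simp only [Set.mem_iUnion, Set.mem_Iic]
  constructor
  · intro ha
    obtain ⟨m, hm, ham⟩ := exists_le_maxSet hA ha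
    exact ⟨m, hm, ham⟩
  · rintro ⟨m, hm, ham⟩
    exact isLowerSet_of_mem hA ham hm.1

theorem eq_of_maxSet_eq {A B : Set R} (hA : A ∈ FinLower R) (hB : B ∈ FinLower R)
    (h : maxSet A = maxSet B) : A = B := by
  rw [eq_biUnion_maxSet hA, eq_biUnion_maxSet hB, h]

theorem empty_mem : (∅ : Set R) ∈ FinLower R := ⟨∅, by simp⟩

theorem univ_mem : (Set.univ : Set R) ∈ FinLower R := by
  refine ⟨{⊤}, ?_⟩
  ext a
  simp [le_top]

theorem inter_mem {A B : Set R} (hA : A ∈ FinLower R) (hB : B ∈ FinLower R) :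
    A ∩ B ∈ FinLower R := by
  classical
  obtain ⟨ta, rfl⟩ := hA
  obtain ⟨tb, rfl⟩ := hB
  refine ⟨(ta ×ˢ tb).image (fun p => p.1 ⊓ p.2), ?_⟩
  ext a
  simp only [Set.mem_inter_iff, Set.mem_iUnion, Set.mem_Iic, Finset.mem_image,
    Finset.mem_product, Prod.exists]
  constructor
  · rintro ⟨⟨x, hx, hax⟩, ⟨y, hy, hay⟩⟩
    exact ⟨x ⊓ y, ⟨x, y, ⟨hx, hy⟩, rfl⟩, le_inf hax hay⟩
  · rintro ⟨z, ⟨x, y, ⟨hx, hy⟩, rfl⟩, haz⟩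
    exact ⟨⟨x, hx, haz.trans inf_le_left⟩, ⟨y, hy, haz.trans inf_le_right⟩⟩

end FinLowerAux

open FinLowerAux in
/-- Let `R` be a complete lattice such that every element of the opposite lattice `Rᵒᵈ` is
compact.  Then the collection `F` of finitely generated lower sets of `R` is closed under
intersections of (nonempty) filtered families, and `(F, ⊆)` is a complete lattice (every
subset of `F` has a least upper bound and a greatest lower bound). -/
theorem finLower_filtered_inter_and_complete {R : Type*} [CompleteLattice R]
    (hcomp : ∀ x : Rᵒᵈ, IsCompactElement x) :
    (∀ C : Set (Set R), C.Nonempty → (∀ A ∈ C, A ∈ FinLower R) →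
      DirectedOn (fun A B : Set R => B ⊆ A) C → ⋂₀ C ∈ FinLower R) ∧
    (∀ S : Set ↥(FinLower R), (∃ a : ↥(FinLower R), IsLUB S a) ∧
      (∃ b : ↥(FinLower R), IsGLB S b)) := by
  classical
  -- Step 1: `<` is well-founded on `R`.
  have hwfR : WellFounded ((· < ·) : R → R → Prop) := by
    have h1 : CompleteLattice.IsSupFiniteCompact Rᵒᵈ :=
      (CompleteLattice.isSupFiniteCompact_iff_all_elements_compact Rᵒᵈ).2 hcomp
    exact (CompleteLattice.IsSupFiniteCompact.wellFoundedGT Rᵒᵈ h1).wf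
  -- Step 2: a well-order extending `<`.
  obtain ⟨s, hsub, hwo⟩ := @IsWellFounded.exists_well_order_ge R (· < ·) ⟨hwfR⟩
  haveI : IsWellOrder R s := hwo
  have hswf : WellFounded s := IsWellFounded.wf
  -- finite sets have s-maximal elements
  have smax : ∀ t : Finset R, t.Nonempty → ∃ a ∈ t, ∀ b ∈ t, b ≠ a → s b a := by
    intro t ht
    induction t using Finset.induction_on with
    | empty => exact absurd ht (by simp)
    | @insert x u hxu ih =>
      rcases u.eq_empty_or_nonempty with rfl | hu
      · exact ⟨x, by simp, by simp⟩
      · obtain ⟨a, hau, hamax⟩ := ih hu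
        rcases trichotomous_of s x a with h | h | h
        · refine ⟨a, Finset.mem_insert_of_mem hau, ?_⟩
          intro b hb hba
          rcases Finset.mem_insert.1 hb with rfl | hbu
          · exact h
          · exact hamax b hbu hba
        · subst h
          refine ⟨x, Finset.mem_insert_of_mem hau, ?_⟩
          intro b hb hba
          rcases Finset.mem_insert.1 hb with rfl | hbu
          · exact absurd rfl hba
          · exact hamax b hbu hba
        · refine ⟨x, Finset.mem_insert_self x u, ?_⟩
          intro b hb hbx
          rcases Finset.mem_insert.1 hb with rfl | hbu
          · exact absurd rfl hbx
          · rcases eq_or_ne b a with rfl | hba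
            · exact h
            · exact _root_.trans (hamax b hbu hba) h
  -- Step 3: well-foundedness of the lexicographic order on `R →₀ ℕ`.
  haveI : IsTrichotomous R (Function.swap s) := IsTrichotomous.swap s
  have wfLex : WellFounded (Finsupp.Lex (Function.swap s) ((· < ·) : ℕ → ℕ → Prop)) :=
    Finsupp.Lex.wellFounded' (fun n h => Nat.not_lt_zero n h) (Nat.lt_wfRel.wf)
      (by exact hswf)
  -- Step 4: the map to finsupps.
  set φ : ↥(FinLower R) → (R →₀ ℕ) :=
    fun X => Finsupp.indicator (maxSet_finite X.2).toFinset (fun _ _ => 1) with hφ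
  have hφ1 : ∀ (X : ↥(FinLower R)) (a : R), a ∈ maxSet (X : Set R) → φ X a = 1 := by
    intro X a ha
    have : a ∈ (maxSet_finite X.2).toFinset := (Set.Finite.mem_toFinset _).2 ha
    simp [hφ, Finsupp.indicator_apply, this]
  have hφ0 : ∀ (X : ↥(FinLower R)) (a : R), a ∉ maxSet (X : Set R) → φ X a = 0 := by
    intro X a ha
    have : a ∉ (maxSet_finite X.2).toFinset := fun h => ha ((Set.Finite.mem_toFinset _).1 h)
    simp [hφ, Finsupp.indicator_apply, this]
  -- Step 5: strict inclusion decreases φ in the lex order.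
  have key : ∀ X Y : ↥(FinLower R), (X : Set R) ⊂ (Y : Set R) →
      Finsupp.Lex (Function.swap s) ((· < ·) : ℕ → ℕ → Prop) (φ X) (φ Y) := by
    intro X Y hXY
    set MA := maxSet (X : Set R) with hMA
    set MB := maxSet (Y : Set R) with hMB
    have hne : MA ≠ MB := fun h => hXY.ne (eq_of_maxSet_eq X.2 Y.2 h)
    set ΔF : Finset R :=
      ((maxSet_finite X.2).toFinset ∪ (maxSet_finite Y.2).toFinset).filter
        (fun x => ¬ (x ∈ MA ↔ x ∈ MB)) with hΔF
    have hΔmem : ∀ x, x ∈ ΔF ↔ ¬ (x ∈ MA ↔ x ∈ MB) := by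
      intro x
      simp only [hΔF, Finset.mem_filter, Finset.mem_union, Set.Finite.mem_toFinset]
      rw [← hMA, ← hMB]
      tauto
    have hΔne : ΔF.Nonempty := by
      by_contra h
      apply hne
      ext x
      by_contra hx
      rw [Finset.not_nonempty_iff_eq_empty] at h
      have : x ∈ ΔF := (hΔmem x).2 (by tauto)
      simp [h] at this
    obtain ⟨a, haΔ, hamax⟩ := smax ΔF hΔne
    have hdisj : ¬ (a ∈ MA ↔ a ∈ MB) := (hΔmem a).1 haΔ
    -- show a ∈ MB \ MA
    have haB : a ∈ MB ∧ a ∉ MA := by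
      by_cases h1 : a ∈ MA
      · by_cases h2 : a ∈ MB
        · tauto
        · exfalso
          have haY : a ∈ (Y : Set R) := hXY.subset h1.1
          obtain ⟨m, hmB, ham⟩ := exists_le_maxSet Y.2 haY
          have hne' : a ≠ m := fun h => h2 (h ▸ hmB)
          have hlt : a < m := lt_of_le_of_ne ham hne'
          have hmA : m ∉ MA := fun hm => h1.2 m hm.1 hlt
          have hmΔ : m ∈ ΔF := (hΔmem m).2 (by tauto)
          have hma : m ≠ a := fun h => h2 (h ▸ hmB)
          have h3 : s m a := hamax m hmΔ hma
          have h4 : s a m := hsub a m hlt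
          exact irrefl_of s a (_root_.trans h4 h3)
      · by_cases h2 : a ∈ MB
        · exact ⟨h2, h1⟩
        · tauto
    refine Finsupp.lex_def.2 ⟨a, ?_, ?_⟩
    · intro j hj
      -- hj : Function.swap s j a, i.e. s a j
      have hjΔ : j ∉ ΔF := by
        intro hjmem
        have hja : j ≠ a := by
          rintro rfl
          exact irrefl_of s j hj
        exact irrefl_of s a (_root_.trans hj (hamax j hjmem hja))
      have hiff : j ∈ MA ↔ j ∈ MB := by
        by_contra h
        exact hjΔ ((hΔmem j).2 h)
      by_cases hjA : j ∈ MA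
      · rw [hφ1 X j hjA, hφ1 Y j (hiff.1 hjA)]
      · rw [hφ0 X j hjA, hφ0 Y j (fun h => hjA (hiff.2 h))]
    · rw [hφ0 X a haB.2, hφ1 Y a haB.1]
      exact Nat.zero_lt_one
  -- Step 6: strict inclusion is well-founded on `FinLower R`.
  have wfSub : WellFounded (fun X Y : ↥(FinLower R) => (X : Set R) ⊂ (Y : Set R)) :=
    Subrelation.wf (fun {X Y} h => key X Y h) (InvImage.wf φ wfLex)
  -- Step 7: every nonempty filtered family has a least element.
  have minlem : ∀ D : Set (Set R), D.Nonempty → (∀ A ∈ D, A ∈ FinLower R) →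
      DirectedOn (fun A B : Set R => B ⊆ A) D → ∃ A₀ ∈ D, ∀ A ∈ D, A₀ ⊆ A := by
    intro D hDne hDsub hdir
    set D' : Set ↥(FinLower R) := {X | (X : Set R) ∈ D} with hD'
    have hD'ne : D'.Nonempty := by
      obtain ⟨A, hA⟩ := hDne
      exact ⟨⟨A, hDsub A hA⟩, hA⟩
    obtain ⟨X₀, hX₀, hmin⟩ := wfSub.has_min D' hD'ne
    refine ⟨X₀, hX₀, ?_⟩
    intro A hA
    obtain ⟨W, hW, hWA, hWX⟩ := hdir A hA (X₀ : Set R) hX₀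
    have hW' : (⟨W, hDsub W hW⟩ : ↥(FinLower R)) ∈ D' := hW
    have hnss : ¬ ((W : Set R) ⊂ (X₀ : Set R)) := hmin ⟨W, hDsub W hW⟩ hW'
    have : (X₀ : Set R) ⊆ W := by
      by_contra h
      exact hnss ⟨hWX, h⟩
    exact this.trans hWA
  constructor
  · -- filtered intersections
    intro C hne hsubC hdir
    obtain ⟨A₀, hA₀C, hmin⟩ := minlem C hne hsubC hdir
    have : ⋂₀ C = A₀ :=
      subset_antisymm (Set.sInter_subset_of_mem hA₀C) (Set.subset_sInter hmin)
    rw [this]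
    exact hsubC A₀ hA₀C
  · -- complete lattice structure
    have hlub : ∀ S : Set ↥(FinLower R), ∃ a : ↥(FinLower R), IsLUB S a := by
      intro S
      set U : Set (Set R) := {A | A ∈ FinLower R ∧ ∀ B ∈ S, (B : Set R) ⊆ A} with hU
      have hUne : U.Nonempty := ⟨Set.univ, univ_mem, fun B _ => Set.subset_univ _⟩
      have hUsub : ∀ A ∈ U, A ∈ FinLower R := fun A hA => hA.1
      have hUdir : DirectedOn (fun A B : Set R => B ⊆ A) U := by
        intro A hA B hB
        exact ⟨A ∩ B, ⟨inter_mem hA.1 hB.1,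
          fun C hC => Set.subset_inter (hA.2 C hC) (hB.2 C hC)⟩,
          Set.inter_subset_left, Set.inter_subset_right⟩
      obtain ⟨a₀, ha₀U, hmin⟩ := minlem U hUne hUsub hUdir
      refine ⟨⟨a₀, ha₀U.1⟩, ?_, ?_⟩
      · intro B hB
        exact ha₀U.2 B hB
      · intro u hu
        exact hmin (u : Set R) ⟨u.2, fun B hB => hu hB⟩
    intro S
    refine ⟨hlub S, ?_⟩
    obtain ⟨b, hb⟩ := hlub (lowerBounds S)
    refine ⟨b, ?_, ?_⟩
    · intro B hB
      exact hb.2 (fun c hc => hc hB)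
    · intro c hc
      exact hb.1 hc
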